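/- Let H ⊆ ℝⁿ be a rational half-line with origin v ∈ ℚⁿ, and let H_reg be the set of rational points h ∈ H such that the segment conv(v,h) is Farey-regular. Then any two distinct points of H_reg have different denominators. -/

import Mathlib

open scoped BigOperators

noncomputable section

/-- Embedding of a rational point of ℚⁿ into ℝⁿ. -/
def toR {n : ℕ} (x : Fin n → ℚ) : Fin n → ℝ := fun i => (x i : ℝ)

/-- Least common denominator of a rational point. -/
def den {n : ℕ} (x : Fin n → ℚ) : ℕ := Finset.univ.lcm fun i => (x i).den

/-- Homogeneous correspondent x̃ = (den(x)·x, den(x)) ∈ ℤ^{n+1}. -/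
def homog {n : ℕ} (x : Fin n → ℚ) : Fin (n + 1) → ℤ :=
  Fin.snoc (fun i => ((den x : ℚ) * x i).num) (den x)

/-- A rational d-simplex, given by its vertices, is Farey-regular if the vertices are
affinely independent and their homogeneous correspondents extend to a ℤ-basis of ℤ^{n+1}. -/
def IsFareyRegular {n d : ℕ} (v : Fin (d + 1) → Fin n → ℚ) : Prop :=
  AffineIndependent ℝ (fun i => toR (v i)) ∧
  ∃ (b : Module.Basis (Fin (n + 1)) ℤ (Fin (n + 1) → ℤ)) (ι : Fin (d + 1) → Fin (n + 1)),
    Function.Injective ι ∧ ∀ i, b (ι i) = homog (v i)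

/-- A rational segment conv(a,b) is Farey-regular. -/
def SegRegular {n : ℕ} (a b : Fin n → ℚ) : Prop := IsFareyRegular ![a, b]

/-- Maps in GL(n,ℤ) ⋉ ℤⁿ : x ↦ Mx + t with M an integer matrix with det ±1. -/
def IsUnimodularAffine {n : ℕ} (γ : (Fin n → ℝ) → Fin n → ℝ) : Prop :=
  ∃ (M : Matrix (Fin n) (Fin n) ℤ) (t : Fin n → ℤ), IsUnit M.det ∧
    ∀ x, γ x = fun i => (∑ j, (M i j : ℝ) * x j) + (t i : ℝ)

/-- A rational affine space: an intersection of rational affine hyperplanes of ℝⁿ. -/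
def IsRatAffineSpace {n : ℕ} (F : Set (Fin n → ℝ)) : Prop :=
  ∃ (ι : Type) (p : ι → Fin n → ℚ) (c : ι → ℚ), (∀ i, p i ≠ 0) ∧
    F = ⋂ i, {z | (∑ j, (p i j : ℝ) * z j) = (c i : ℝ)}

/-- Affine dimension of a subset of ℝⁿ. -/
def affDim {n : ℕ} (F : Set (Fin n → ℝ)) : ℕ :=
  Module.finrank ℝ (vectorSpan ℝ F)

/-- d_F: least denominator of a rational point of F. -/
def dF {n : ℕ} (F : Set (Fin n → ℝ)) : ℕ :=
  sInf {d | ∃ v : Fin n → ℚ, toR v ∈ F ∧ den v = d}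

/-- c_F: least denominator of a rational point v such that conv(v,v₀,…,v_e) is a
Farey-regular (e+1)-simplex for some v₀,…,v_e ∈ F ∩ ℚⁿ (e = dim F < n); c_F = 1 if dim F = n. -/
def cF {n : ℕ} (F : Set (Fin n → ℝ)) : ℕ :=
  if affDim F = n then 1 else
  sInf {c | ∃ (v : Fin n → ℚ) (w : Fin (affDim F + 1) → Fin n → ℚ),
    (∀ i, toR (w i) ∈ F) ∧ IsFareyRegular (Fin.cons v w) ∧ den v = c}

/-- Euclidean distance on ℝⁿ. -/
def eudist {n : ℕ} (x y : Fin n → ℝ) : ℝ := Real.sqrt (∑ i, (x i - y i) ^ 2)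

/-- The sequence a = x₀, x₁, …, x_{u+1} = b of consecutive vertices of the
Hirzebruch–Jung triangulation of the rational segment conv(a,b): each x_{i+1} is the
farthest rational point z from xᵢ in conv(a,b) such that conv(xᵢ,z) is Farey-regular. -/
def IsHJSeq {n : ℕ} (a b : Fin n → ℚ) {u : ℕ} (x : Fin (u + 2) → Fin n → ℚ) : Prop :=
  x 0 = a ∧ x (Fin.last (u + 1)) = b ∧
  ∀ i : Fin (u + 1),
    toR (x i.succ) ∈ segment ℝ (toR a) (toR b) ∧
    SegRegular (x i.castSucc) (x i.succ) ∧
    ∀ z : Fin n → ℚ, toR z ∈ segment ℝ (toR a) (toR b) →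
      SegRegular (x i.castSucc) z →
      eudist (toR z) (toR (x i.castSucc)) ≤ eudist (toR (x i.succ)) (toR (x i.castSucc))

/-- A regular triangulation of the rational segment conv(a,b), described by its
consecutive vertices a = y₀, …, y_{k+1} = b: consecutive 1-simplexes are Farey-regular. -/
def IsRegTriSeq {n : ℕ} (a b : Fin n → ℚ) {k : ℕ} (y : Fin (k + 2) → Fin n → ℚ) : Prop :=
  y 0 = a ∧ y (Fin.last (k + 1)) = b ∧
  ∀ i : Fin (k + 1),
    toR (y i.succ) ∈ segment ℝ (toR (y i.castSucc)) (toR b) ∧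
    SegRegular (y i.castSucc) (y i.succ)

/-- A rational half-line with rational origin v: {v + t(w - v) : t ≥ 0} for some rational w ≠ v. -/
def IsRatHalfLine {n : ℕ} (H : Set (Fin n → ℝ)) (v : Fin n → ℚ) : Prop :=
  ∃ w : Fin n → ℚ, w ≠ v ∧
    H = {P | ∃ t : ℝ, 0 ≤ t ∧ P = fun i => toR v i + t * (toR w i - toR v i)}

lemma den_pos' {n : ℕ} (x : Fin n → ℚ) : 0 < den x := by
  rw [Nat.pos_iff_ne_zero, den]
  intro h0
  have := Finset.lcm_eq_zero_iff.mp h0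
  simp only [Set.mem_image, Finset.mem_coe, Finset.mem_univ] at this
  obtain ⟨i, -, hi⟩ := this
  exact (x i).den_nz hi

lemma den_mul_self (q : ℚ) : (q.den : ℚ) * q = (q.num : ℚ) := by
  have h : (q.den : ℚ) ≠ 0 := by exact_mod_cast q.den_nz
  have := Rat.num_div_den q
  rw [div_eq_iff h] at this
  linarith

lemma den_mul_int {n : ℕ} (x : Fin n → ℚ) (i : Fin n) :
    ((((den x : ℚ) * x i).num : ℤ) : ℚ) = (den x : ℚ) * x i := by
  obtain ⟨c, hc⟩ : ((x i).den : ℕ) ∣ den x := Finset.dvd_lcm (Finset.mem_univ i)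
  have : (den x : ℚ) * x i = (((x i).num * c : ℤ) : ℚ) := by
    rw [hc]
    push_cast
    rw [mul_comm ((x i).den : ℚ) (c : ℚ), mul_assoc, den_mul_self]
    ring
  rw [this, Rat.num_intCast]

lemma coeff_int {n : ℕ} (b : Module.Basis (Fin (n+1)) ℤ (Fin (n+1) → ℤ)) (i j : Fin (n+1))
    (hij : i ≠ j) (z : Fin (n+1) → ℤ) (α β : ℚ)
    (hrel : ∀ c, (z c : ℚ) = α * (b i c : ℚ) + β * (b j c : ℚ)) :
    ∃ m : ℤ, (m : ℚ) = α := by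
  set N : ℤ := (α.den : ℤ) * (β.den : ℤ) with hNdef
  have hαden : ((α.den : ℚ)) ≠ 0 := by exact_mod_cast α.den_nz
  have hβden : ((β.den : ℚ)) ≠ 0 := by exact_mod_cast β.den_nz
  have hN : (N : ℚ) ≠ 0 := by rw [hNdef]; push_cast; exact mul_ne_zero hαden hβden
  have hNα : (N : ℚ) * α = ((α.num * (β.den : ℤ) : ℤ) : ℚ) := by
    rw [hNdef]; push_cast
    calc (α.den : ℚ) * (β.den : ℚ) * α = (β.den : ℚ) * ((α.den : ℚ) * α) := by ring
    _ = (β.den : ℚ) * (α.num : ℚ) := by rw [den_mul_self]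
    _ = _ := by ring
  have hNβ : (N : ℚ) * β = (((α.den : ℤ) * β.num : ℤ) : ℚ) := by
    rw [hNdef]; push_cast
    calc (α.den : ℚ) * (β.den : ℚ) * β = (α.den : ℚ) * ((β.den : ℚ) * β) := by ring
    _ = (α.den : ℚ) * (β.num : ℚ) := by rw [den_mul_self]
  have hz : N • z = (α.num * (β.den : ℤ)) • (b i) + ((α.den : ℤ) * β.num) • (b j) := by
    funext c
    have hq : ((N * z c : ℤ) : ℚ) =
        ((α.num * (β.den : ℤ) * b i c + (α.den : ℤ) * β.num * b j c : ℤ) : ℚ) := by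
      push_cast
      calc (N : ℚ) * (z c : ℚ) = (N : ℚ) * (α * (b i c : ℚ) + β * (b j c : ℚ)) := by
            rw [hrel c]
      _ = ((N : ℚ) * α) * (b i c : ℚ) + ((N : ℚ) * β) * (b j c : ℚ) := by ring
      _ = _ := by rw [hNα, hNβ]; push_cast; ring
    have hq' : N * z c = α.num * (β.den : ℤ) * b i c + (α.den : ℤ) * β.num * b j c := by
      exact_mod_cast hq
    simpa [smul_eq_mul] using hq'
  have h1 : b.repr (N • z) i = α.num * (β.den : ℤ) := by
    rw [hz, map_add, map_smul, map_smul]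
    simp [Module.Basis.repr_self, Finsupp.single_apply, Ne.symm hij, smul_eq_mul]
  have h2 : b.repr (N • z) i = N * b.repr z i := by
    rw [map_smul]; simp [smul_eq_mul]
  refine ⟨b.repr z i, ?_⟩
  have hZ : N * b.repr z i = α.num * (β.den : ℤ) := h2 ▸ h1
  have : (N : ℚ) * ((b.repr z i : ℤ) : ℚ) = (N : ℚ) * α := by
    rw [hNα]
    exact_mod_cast congrArg (Int.cast : ℤ → ℚ) hZ
  exact mul_left_cancel₀ hN this

lemma aux_step {n : ℕ} (v a c u : Fin n → ℚ) (ta tc : ℚ) (hta : ta ≠ 0)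
    (ha : ∀ j, a j = v j + ta * u j) (hc : ∀ j, c j = v j + tc * u j)
    (hreg : SegRegular v a) (hdac : den a = den c) :
    ∃ m : ℤ, (m : ℚ) = tc / ta := by
  obtain ⟨-, b, ι, hι, hb⟩ := hreg
  have hbv : b (ι 0) = homog v := by simpa using hb 0
  have hba : b (ι 1) = homog a := by simpa using hb 1
  have hdv : ((den v : ℚ)) ≠ 0 := by exact_mod_cast (den_pos' v).ne'
  have hij : ι 1 ≠ ι 0 := fun e => absurd (hι e) (by decide)
  refine coeff_int b (ι 1) (ι 0) hij (homog c) (tc / ta)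
    ((den a : ℚ) * (ta - tc) / (ta * (den v : ℚ))) ?_
  intro cc
  rw [hbv, hba]
  refine Fin.lastCases ?_ ?_ cc
  · simp only [homog, Fin.snoc_last]
    push_cast
    rw [← hdac]
    field_simp
    ring
  · intro j
    simp only [homog, Fin.snoc_castSucc]
    rw [den_mul_int, den_mul_int, den_mul_int, ha j, hc j, ← hdac]
    field_simp
    ring

/-- On a rational half-line H with origin v, any two distinct points of
H_reg = {h ∈ H ∩ ℚⁿ : conv(v,h) Farey-regular} have different denominators. -/
theorem halfline_reg_den_injective {n : ℕ}
    (H : Set (Fin n → ℝ)) (v : Fin n → ℚ) (hH : IsRatHalfLine H v)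
    (h k : Fin n → ℚ)
    (hh : toR h ∈ H) (hk : toR k ∈ H)
    (hreg : SegRegular v h) (kreg : SegRegular v k)
    (hne : h ≠ k) :
    den h ≠ den k := by
  intro hden
  obtain ⟨w, hwv, hHeq⟩ := hH
  rw [hHeq] at hh hk
  obtain ⟨s₁, hs₁0, hh'⟩ := hh
  obtain ⟨s₂, hs₂0, hk'⟩ := hk
  obtain ⟨i₀, hi₀⟩ : ∃ i, w i ≠ v i := Function.ne_iff.mp hwv
  have hwvi : (w i₀ : ℚ) - v i₀ ≠ 0 := sub_ne_zero.mpr hi₀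
  have hwviR : ((w i₀ : ℝ)) - (v i₀ : ℝ) ≠ 0 := by exact_mod_cast hwvi
  set t₁ : ℚ := (h i₀ - v i₀) / (w i₀ - v i₀) with ht₁def
  set t₂ : ℚ := (k i₀ - v i₀) / (w i₀ - v i₀) with ht₂def
  have hs₁ : s₁ = (t₁ : ℝ) := by
    have e := congrFun hh' i₀
    simp only [toR] at e
    rw [ht₁def]
    push_cast
    rw [eq_div_iff hwviR]
    linarith
  have hs₂ : s₂ = (t₂ : ℝ) := by
    have e := congrFun hk' i₀
    simp only [toR] at e
    rw [ht₂def]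
    push_cast
    rw [eq_div_iff hwviR]
    linarith
  have hco₁ : ∀ j, h j = v j + t₁ * (w j - v j) := by
    intro j
    have e := congrFun hh' j
    rw [hs₁] at e
    simp only [toR] at e
    exact_mod_cast e
  have hco₂ : ∀ j, k j = v j + t₂ * (w j - v j) := by
    intro j
    have e := congrFun hk' j
    rw [hs₂] at e
    simp only [toR] at e
    exact_mod_cast e
  have hvh : v ≠ h := by
    intro e
    have hinj := hreg.1.injective
    have : ((0 : Fin 2)) = 1 := hinj (by simp [e])
    simp at this
  have hvk : v ≠ k := by
    intro e
    have hinj := kreg.1.injective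
    have : ((0 : Fin 2)) = 1 := hinj (by simp [e])
    simp at this
  have ht₁ : t₁ ≠ 0 := by
    intro e
    apply hvh
    funext j
    have := hco₁ j
    rw [e] at this
    simp at this
    exact this.symm
  have ht₂ : t₂ ≠ 0 := by
    intro e
    apply hvk
    funext j
    have := hco₂ j
    rw [e] at this
    simp at this
    exact this.symm
  have ht₁pos : 0 < t₁ := lt_of_le_of_ne (by exact_mod_cast hs₁ ▸ hs₁0) (Ne.symm ht₁)
  have ht₂pos : 0 < t₂ := lt_of_le_of_ne (by exact_mod_cast hs₂ ▸ hs₂0) (Ne.symm ht₂)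
  obtain ⟨m, hm⟩ := aux_step v h k (fun j => w j - v j) t₁ t₂ ht₁ hco₁ hco₂ hreg hden
  obtain ⟨m', hm'⟩ := aux_step v k h (fun j => w j - v j) t₂ t₁ ht₂ hco₂ hco₁ kreg hden.symm
  have hmm' : m * m' = 1 := by
    have : ((m * m' : ℤ) : ℚ) = 1 := by
      push_cast
      rw [hm, hm']
      field_simp
    exact_mod_cast this
  have hm1 : 1 ≤ m := by
    have : (0 : ℚ) < (m : ℚ) := by rw [hm]; positivity
    have : 0 < m := by exact_mod_cast this
    omega
  have hm1' : 1 ≤ m' := by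
    have : (0 : ℚ) < (m' : ℚ) := by rw [hm']; positivity
    have : 0 < m' := by exact_mod_cast this
    omega
  have hmeq : m = 1 := by nlinarith
  have htt : t₂ = t₁ := by
    have : (1 : ℚ) = t₂ / t₁ := by rw [← hm, hmeq]; norm_num
    field_simp at this
    linarith
  apply hne
  funext j
  rw [hco₁ j, hco₂ j, htt]
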